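/- Let ν be a Gibbs measure on Θ and let c_0 c_1 … c_{n−1} be an admissible word. Then ν(Θ_{c_0…c_{n−1}}) = ∫_M ρ_ξ(c_0…c_{n−1}) d((π_s)_*ν)(ξ), where M = {ξ ∈ Θ^s : ξ_0 = c_0} and (π_s)_*ν is the pushforward of ν under π_s. -/

import Mathlib

open MeasureTheory Filter Topology

namespace PaperSFT

/-- The two-sided subshift of finite type determined by the transition function `A`. -/
abbrev Theta {k : ℕ} (A : Fin k → Fin k → Bool) : Type :=
  {w : ℤ → Fin k // ∀ i : ℤ, A (w i) (w (i + 1)) = true}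

/-- The one-sided (unstable) subshift of right-infinite admissible words. -/
abbrev ThetaU {k : ℕ} (A : Fin k → Fin k → Bool) : Type :=
  {w : ℕ → Fin k // ∀ i : ℕ, A (w i) (w (i + 1)) = true}

/-- The one-sided (stable) subshift of left-infinite admissible words `… w₁ w₀`. -/
abbrev ThetaS {k : ℕ} (A : Fin k → Fin k → Bool) : Type :=
  {w : ℕ → Fin k // ∀ i : ℕ, A (w (i + 1)) (w i) = true}

/-- The transition matrix of `A`. -/
def tmat {k : ℕ} (A : Fin k → Fin k → Bool) : Matrix (Fin k) (Fin k) ℕ :=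
  fun i j => if A i j then 1 else 0

/-- Some power `N ≥ 1` of the transition matrix has all entries positive. -/
def Mixing {k : ℕ} (A : Fin k → Fin k → Bool) : Prop :=
  ∃ N : ℕ, 1 ≤ N ∧ ∀ i j : Fin k, 0 < (tmat A ^ N) i j

/-- The two-sided shift map `τ`. -/
def shift {k : ℕ} (A : Fin k → Fin k → Bool) : Theta A → Theta A :=
  fun w => ⟨fun i => w.1 (i + 1), fun i => w.2 (i + 1)⟩

/-- The one-sided shift map `τ_u`. -/
def shiftU {k : ℕ} (A : Fin k → Fin k → Bool) : ThetaU A → ThetaU A :=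
  fun w => ⟨fun i => w.1 (i + 1), fun i => w.2 (i + 1)⟩

/-- The cylinder `{v ∈ Θ : v_i = w_i for m ≤ i ≤ n}` (nonnegative coordinates). -/
def cylP {k : ℕ} (A : Fin k → Fin k → Bool) (w : ℕ → Fin k) (m n : ℕ) : Set (Theta A) :=
  {v : Theta A | ∀ i : ℕ, m ≤ i → i ≤ n → v.1 (i : ℤ) = w i}

/-- The cylinder `{v ∈ Θ : v_{-i} = w_i for m ≤ i ≤ n}` (nonpositive coordinates). -/
def cylN {k : ℕ} (A : Fin k → Fin k → Bool) (w : ℕ → Fin k) (m n : ℕ) : Set (Theta A) :=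
  {v : Theta A | ∀ i : ℕ, m ≤ i → i ≤ n → v.1 (-(i : ℤ)) = w i}

/-- The ratio `ν(E)/ν(F)` of the measures of two sets, as a real number. -/
noncomputable def mratio {k : ℕ} {A : Fin k → Fin k → Bool}
    (ν : Measure (Theta A)) (E F : Set (Theta A)) : ℝ :=
  (ν E).toReal / (ν F).toReal

/-- Hölder continuity of a function on a one-sided sequence space, with respect to the
metric `d(w,w') = 2^{-n}` where `n` is the largest integer with `w_i = w'_i` for `i ≤ n`. -/
def HolderOnSeq {k : ℕ} {P : (ℕ → Fin k) → Prop} (φ : {w : ℕ → Fin k // P w} → ℝ) : Prop :=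
  ∃ c : ℝ, 0 < c ∧ ∃ β : ℝ, 0 < β ∧ ∀ w w' : {w : ℕ → Fin k // P w}, ∀ n : ℕ,
    (∀ i ≤ n, w.1 i = w'.1 i) → |φ w - φ w'| ≤ c * (2 : ℝ) ^ (-(n : ℝ) * β)

/-- `ν` is invariant under the two-sided shift. -/
def Invariant {k : ℕ} (A : Fin k → Fin k → Bool) (ν : Measure (Theta A)) : Prop :=
  ∀ S : Set (Theta A), MeasurableSet S → ν (shift A ⁻¹' S) = ν S

/-- `ν` gives positive measure to every cylinder. -/
def PosOnCyl {k : ℕ} (A : Fin k → Fin k → Bool) (ν : Measure (Theta A)) : Prop :=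
  ∀ (w : Theta A) (a b : ℤ),
    0 < ν {v : Theta A | ∀ i : ℤ, a ≤ i → i ≤ b → v.1 i = w.1 i}

/-- The ratios `ν(Θ_{w₀…w_n}) / ν(Θ_{w₁…w_n})` converge to `L` (as `n → ∞`). -/
def URatioLim {k : ℕ} (A : Fin k → Fin k → Bool) (ν : Measure (Theta A))
    (w : ThetaU A) (L : ℝ) : Prop :=
  Tendsto (fun n : ℕ =>
      mratio ν (cylP A w.1 0 (n + 1)) (cylP A (fun i => w.1 (i + 1)) 0 n))
    atTop (𝓝 L)

/-- The ratios `ν({v : v_{-i} = w_i, 0 ≤ i ≤ n}) / ν({v : v_{-i} = w_i, 1 ≤ i ≤ n})`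
converge to `L`. -/
def SRatioLim {k : ℕ} (A : Fin k → Fin k → Bool) (ν : Measure (Theta A))
    (w : ThetaS A) (L : ℝ) : Prop :=
  Tendsto (fun n : ℕ => mratio ν (cylN A w.1 0 n) (cylN A w.1 1 n)) atTop (𝓝 L)

/-- A Gibbs measure: a shift-invariant Borel probability measure which is positive on
cylinders and whose one-sided measure ratios converge to Hölder continuous scaling
functions on `Θ^u` and `Θ^s`. -/
def IsGibbs {k : ℕ} (A : Fin k → Fin k → Bool) (ν : Measure (Theta A)) : Prop :=
  IsProbabilityMeasure ν ∧ Invariant A ν ∧ PosOnCyl A ν ∧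
  (∃ sU : ThetaU A → ℝ, HolderOnSeq sU ∧ ∀ w : ThetaU A, URatioLim A ν w (sU w)) ∧
  (∃ sS : ThetaS A → ℝ, HolderOnSeq sS ∧ ∀ w : ThetaS A, SRatioLim A ν w (sS w))

/-- `c₀ … c_{n-1}` is an admissible word. -/
def AdmWord {k : ℕ} (A : Fin k → Fin k → Bool) (c : ℕ → Fin k) (n : ℕ) : Prop :=
  ∀ i : ℕ, i + 1 < n → A (c i) (c (i + 1)) = true

/-- The set `E_m = {v ∈ Θ : v_{-i} = ξ_i for 0 ≤ i ≤ m and v_j = c_j for 0 ≤ j ≤ n-1}`. -/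
def cylE {k : ℕ} (A : Fin k → Fin k → Bool) (ξ : ThetaS A) (c : ℕ → Fin k)
    (n m : ℕ) : Set (Theta A) :=
  {v : Theta A | (∀ i : ℕ, i ≤ m → v.1 (-(i : ℤ)) = ξ.1 i) ∧
    (∀ j : ℕ, j < n → v.1 (j : ℤ) = c j)}

/-- `ρ_ξ(c₀…c_{n-1}) = r`, i.e. the ratios `ν(E_m)/ν(F_m)` converge to `r`. -/
def RhoLim {k : ℕ} (A : Fin k → Fin k → Bool) (ν : Measure (Theta A))
    (ξ : ThetaS A) (c : ℕ → Fin k) (n : ℕ) (r : ℝ) : Prop :=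
  Tendsto (fun m : ℕ => mratio ν (cylE A ξ c n m) (cylN A ξ.1 0 m)) atTop (𝓝 r)

/-- Prepending an admissible symbol `a` to a right-infinite word `ξ`; this enumerates the
preimages of `ξ` under the one-sided shift `τ_u`. -/
def consU {k : ℕ} (A : Fin k → Fin k → Bool) (a : Fin k) (ξ : ThetaU A)
    (h : A a (ξ.1 0) = true) : ThetaU A :=
  ⟨fun i => Nat.rec a (fun j _ => ξ.1 j) i, by
    intro i
    cases i with
    | zero => exact h
    | succ j => exact ξ.2 j⟩

end PaperSFT

namespace PaperSFT

/-- The projection `π_s : Θ → Θ^s`, `(π_s v)_i = v_{-i}`. -/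
def projS {k : ℕ} (A : Fin k → Fin k → Bool) : Theta A → ThetaS A :=
  fun v => ⟨fun i => v.1 (-(i : ℤ)), by
    intro i
    show A (v.1 (-((i + 1 : ℕ) : ℤ))) (v.1 (-(i : ℤ))) = true
    have h := v.2 (-(i : ℤ) - 1)
    have e1 : (-(i : ℤ) - 1) + 1 = -(i : ℤ) := by ring
    rw [e1] at h
    rw [show (-((i + 1 : ℕ) : ℤ)) = -(i : ℤ) - 1 by push_cast; ring]
    exact h⟩

section Aux

variable {k : ℕ} {A : Fin k → Fin k → Bool}

lemma measurable_coordT (t : ℤ) : Measurable (fun v : Theta A => v.1 t) :=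
  (measurable_pi_apply t).comp measurable_subtype_coe

lemma measurable_coordS (i : ℕ) : Measurable (fun ξ : ThetaS A => ξ.1 i) :=
  (measurable_pi_apply i).comp measurable_subtype_coe

lemma measurableSet_coordT (t : ℤ) (a : Fin k) :
    MeasurableSet {v : Theta A | v.1 t = a} :=
  measurable_coordT t (measurableSet_singleton a)

lemma measurable_projS : Measurable (projS A) :=
  Measurable.subtype_mk (measurable_pi_lambda _ fun i => measurable_coordT _)

lemma measurableSet_forallS (S : Set ℕ) (f : ℕ → ℤ) (w : ℕ → Fin k) :
    MeasurableSet {v : Theta A | ∀ i ∈ S, v.1 (f i) = w i} := by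
  have h : {v : Theta A | ∀ i ∈ S, v.1 (f i) = w i}
      = ⋂ i ∈ S, {v : Theta A | v.1 (f i) = w i} := by
    ext v; simp
  rw [h]
  exact MeasurableSet.biInter (Set.to_countable S) fun i _ => measurableSet_coordT _ _

/-- Extension of a finite word to `ℕ`. -/
def Wext {k : ℕ} (m : ℕ) (u : Fin (m + 1) → Fin k) : ℕ → Fin k :=
  fun i => u ⟨min i m, Nat.lt_succ_of_le (min_le_right i m)⟩

lemma Wext_of_le {m : ℕ} (u : Fin (m + 1) → Fin k) {i : ℕ} (h : i ≤ m) :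
    Wext m u i = u ⟨i, Nat.lt_succ_of_le h⟩ := by
  simp [Wext, Nat.min_eq_left h]

lemma Wext_fin {m : ℕ} (u : Fin (m + 1) → Fin k) (i : Fin (m + 1)) :
    Wext m u (i : ℕ) = u i := by
  rw [Wext_of_le u (Nat.lt_succ_iff.mp i.2), Fin.eta]

/-- The past cylinder determined by a finite word. -/
def Fw (A : Fin k → Fin k → Bool) (m : ℕ) (u : Fin (m + 1) → Fin k) : Set (Theta A) :=
  {v : Theta A | ∀ i : ℕ, i ≤ m → v.1 (-(i : ℤ)) = Wext m u i}

/-- The future cylinder determined by `c₀ … c_{n-1}`. -/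
def Pc (A : Fin k → Fin k → Bool) (c : ℕ → Fin k) (n : ℕ) : Set (Theta A) :=
  {v : Theta A | ∀ j : ℕ, j < n → v.1 (j : ℤ) = c j}

/-- The intersection `E` cylinder. -/
def Ew (A : Fin k → Fin k → Bool) (m : ℕ) (u : Fin (m + 1) → Fin k)
    (c : ℕ → Fin k) (n : ℕ) : Set (Theta A) :=
  Fw A m u ∩ Pc A c n

/-- The cylinder in `Θˢ` determined by a finite word. -/
def CylS (A : Fin k → Fin k → Bool) (m : ℕ) (u : Fin (m + 1) → Fin k) : Set (ThetaS A) :=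
  {ξ : ThetaS A | ∀ i : Fin (m + 1), ξ.1 (i : ℕ) = u i}

lemma measurableSet_Fw (m : ℕ) (u : Fin (m + 1) → Fin k) :
    MeasurableSet (Fw A m u) := by
  have h : Fw A m u
      = {v : Theta A | ∀ i ∈ Set.Iic m, v.1 (-(i : ℤ)) = Wext m u i} := by
    ext v; simp [Fw]
  rw [h]; exact measurableSet_forallS _ _ _

lemma measurableSet_Pc (c : ℕ → Fin k) (n : ℕ) :
    MeasurableSet (Pc A c n) := by
  have h : Pc A c n = {v : Theta A | ∀ j ∈ Set.Iio n, v.1 (j : ℤ) = c j} := by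
    ext v; simp [Pc]
  rw [h]; exact measurableSet_forallS _ _ _

lemma measurableSet_Ew (m : ℕ) (u : Fin (m + 1) → Fin k) (c : ℕ → Fin k) (n : ℕ) :
    MeasurableSet (Ew A m u c n) :=
  (measurableSet_Fw m u).inter (measurableSet_Pc c n)

lemma measurableSet_CylS (m : ℕ) (u : Fin (m + 1) → Fin k) :
    MeasurableSet (CylS A m u) := by
  have h : CylS A m u = ⋂ i : Fin (m + 1), {ξ : ThetaS A | ξ.1 (i : ℕ) = u i} := by
    ext ξ; simp [CylS]
  rw [h]
  exact MeasurableSet.iInter fun i => measurable_coordS _ (measurableSet_singleton _)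

lemma projS_preimage_CylS (m : ℕ) (u : Fin (m + 1) → Fin k) :
    projS A ⁻¹' CylS A m u = Fw A m u := by
  ext v
  constructor
  · intro h i hi
    have := h ⟨i, Nat.lt_succ_of_le hi⟩
    rw [Wext_of_le u hi]
    exact this
  · intro h i
    have := h (i : ℕ) (Nat.lt_succ_iff.mp i.2)
    rw [Wext_fin u i] at this
    exact this

lemma cylN_eq_Fw (m : ℕ) (ξ : ThetaS A) :
    cylN A ξ.1 0 m = Fw A m (fun i : Fin (m + 1) => ξ.1 (i : ℕ)) := by
  ext v
  constructor
  · intro h i hi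
    rw [Wext_of_le _ hi]
    exact h i (Nat.zero_le i) hi
  · intro h i _ hi
    have := h i hi
    rwa [Wext_of_le _ hi] at this

lemma cylE_eq_Ew (m n : ℕ) (ξ : ThetaS A) (c : ℕ → Fin k) :
    cylE A ξ c n m = Ew A m (fun i : Fin (m + 1) => ξ.1 (i : ℕ)) c n := by
  ext v
  constructor
  · rintro ⟨h1, h2⟩
    refine ⟨fun i hi => ?_, h2⟩
    rw [Wext_of_le _ hi]
    exact h1 i hi
  · rintro ⟨h1, h2⟩
    refine ⟨fun i hi => ?_, h2⟩
    have := h1 i hi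
    rwa [Wext_of_le _ hi] at this

lemma Ew_subset_Fw (m : ℕ) (u : Fin (m + 1) → Fin k) (c : ℕ → Fin k) (n : ℕ) :
    Ew A m u c n ⊆ Fw A m u := Set.inter_subset_left

lemma disjoint_Ew (m n : ℕ) (c : ℕ → Fin k) :
    Pairwise (Function.onFun Disjoint (fun u : Fin (m + 1) → Fin k => Ew A m u c n)) := by
  intro u u' huu'
  rw [Function.onFun, Set.disjoint_left]
  rintro v ⟨hv1, _⟩ ⟨hv1', _⟩
  apply huu'
  funext i
  have h1 := hv1 (i : ℕ) (Nat.lt_succ_iff.mp i.2)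
  have h2 := hv1' (i : ℕ) (Nat.lt_succ_iff.mp i.2)
  rw [Wext_fin] at h1 h2
  rw [← h1, ← h2]

lemma iUnion_Ew (m n : ℕ) (c : ℕ → Fin k) (hn : 1 ≤ n) :
    (⋃ u : Fin (m + 1) → Fin k, Ew A m u c n) = cylP A c 0 (n - 1) := by
  ext v
  constructor
  · rintro ⟨_, ⟨u, rfl⟩, ⟨_, h2⟩⟩
    intro j _ hj
    exact h2 j (by omega)
  · intro hv
    refine Set.mem_iUnion.mpr ⟨fun i : Fin (m + 1) => v.1 (-((i : ℕ) : ℤ)), ?_, ?_⟩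
    · intro i hi
      rw [Wext_of_le _ hi]
    · intro j hj
      exact hv j (Nat.zero_le j) (by omega)

end Aux

/-- **Ratio decomposition of a Gibbs measure.**  For a Gibbs measure `ν` and an admissible
word `c₀…c_{n-1}`, `ν(Θ_{c₀…c_{n-1}}) = ∫_M ρ_ξ(c₀…c_{n-1}) d((π_s)_*ν)(ξ)`, where
`M = {ξ ∈ Θ^s : ξ₀ = c₀}`. -/
theorem gibbs_ratio_decomposition
    (k : ℕ) (hk : 1 ≤ k) (A : Fin k → Fin k → Bool) (hA : Mixing A)
    (ν : Measure (Theta A)) (hν : IsGibbs A ν)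
    (c : ℕ → Fin k) (n : ℕ) (hn : 1 ≤ n) (hc : AdmWord A c n)
    (ρval : ThetaS A → ℝ)
    (hρ : ∀ ξ : ThetaS A, ξ.1 0 = c 0 → RhoLim A ν ξ c n (ρval ξ)) :
    (ν (cylP A c 0 (n - 1))).toReal =
      ∫ ξ in {ξ : ThetaS A | ξ.1 0 = c 0}, ρval ξ ∂(ν.map (projS A)) := by
  haveI : IsProbabilityMeasure ν := hν.1
  set μ := ν.map (projS A) with hμdef
  haveI : IsProbabilityMeasure μ :=
    Measure.isProbabilityMeasure_map measurable_projS.aemeasurable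
  set M : Set (ThetaS A) := {ξ : ThetaS A | ξ.1 0 = c 0} with hMdef
  have hMmeas : MeasurableSet M :=
    measurable_coordS 0 (measurableSet_singleton (c 0))
  set g : ℕ → ThetaS A → ℝ :=
    fun m ξ => mratio ν (cylE A ξ c n m) (cylN A ξ.1 0 m) with hgdef
  have hg0 : ∀ m ξ, 0 ≤ g m ξ := fun m ξ =>
    div_nonneg ENNReal.toReal_nonneg ENNReal.toReal_nonneg
  have hg1 : ∀ m ξ, g m ξ ≤ 1 := by
    intro m ξ
    apply div_le_one_of_le₀
    · apply ENNReal.toReal_mono (measure_ne_top ν _)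
      apply measure_mono
      intro v hv i _ hi
      exact hv.1 i hi
    · exact ENNReal.toReal_nonneg
  have hrepr : ∀ m ξ, g m ξ =
      ∑ u : Fin (m + 1) → Fin k,
        (CylS A m u).indicator (fun _ => mratio ν (Ew A m u c n) (Fw A m u)) ξ := by
    intro m ξ
    have huniq : ∀ u : Fin (m + 1) → Fin k,
        ξ ∈ CylS A m u ↔ u = fun i : Fin (m + 1) => ξ.1 (i : ℕ) := by
      intro u
      constructor
      · intro h; funext i; exact (h i).symm
      · rintro rfl; intro i; rfl
    have hz : ∀ u ∈ Finset.univ, u ≠ (fun i : Fin (m + 1) => ξ.1 (i : ℕ)) →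
        (CylS A m u).indicator (fun _ => mratio ν (Ew A m u c n) (Fw A m u)) ξ = 0 := by
      intro u _ hu
      exact Set.indicator_of_notMem (fun h => hu ((huniq u).mp h)) _
    rw [Finset.sum_eq_single_of_mem _ (Finset.mem_univ _) hz,
        Set.indicator_of_mem ((huniq _).mpr rfl)]
    show mratio ν (cylE A ξ c n m) (cylN A ξ.1 0 m) = _
    rw [cylE_eq_Ew, cylN_eq_Fw]
  have hgmeas : ∀ m, Measurable (g m) := by
    intro m
    have h : g m = fun ξ => ∑ u : Fin (m + 1) → Fin k,
        (CylS A m u).indicator (fun _ => mratio ν (Ew A m u c n) (Fw A m u)) ξ :=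
      funext (hrepr m)
    rw [h]
    exact Finset.measurable_sum _ fun u _ =>
      measurable_const.indicator (measurableSet_CylS m u)
  have hvan : ∀ m, ∀ ξ : ThetaS A, ξ ∉ M → g m ξ = 0 := by
    intro m ξ hξ
    have hE : cylE A ξ c n m = ∅ := by
      ext v
      simp only [cylE, Set.mem_setOf_eq, Set.mem_empty_iff_false, iff_false, not_and]
      intro h1 h2
      exfalso
      apply hξ
      have e1 := h1 0 (Nat.zero_le m)
      have e2 := h2 0 hn
      simp only [Nat.cast_zero, neg_zero] at e1 e2
      show ξ.1 0 = c 0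
      rw [← e1]; exact e2
    show mratio ν (cylE A ξ c n m) (cylN A ξ.1 0 m) = 0
    simp [mratio, hE]
  have key : ∀ m : ℕ, ∫ ξ in M, g m ξ ∂μ = (ν (cylP A c 0 (n - 1))).toReal := by
    intro m
    have hindg : Set.indicator M (g m) = g m := by
      funext ξ
      by_cases hξ : ξ ∈ M
      · exact Set.indicator_of_mem hξ _
      · rw [Set.indicator_of_notMem hξ, hvan m ξ hξ]
    have step1 : ∫ ξ in M, g m ξ ∂μ = ∫ ξ, g m ξ ∂μ := by
      rw [← integral_indicator hMmeas, hindg]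
    have step2 : ∫ ξ, g m ξ ∂μ = ∑ u : Fin (m + 1) → Fin k,
        ∫ ξ, (CylS A m u).indicator
          (fun _ => mratio ν (Ew A m u c n) (Fw A m u)) ξ ∂μ := by
      rw [show (fun ξ => g m ξ) = fun ξ => ∑ u : Fin (m + 1) → Fin k,
          (CylS A m u).indicator (fun _ => mratio ν (Ew A m u c n) (Fw A m u)) ξ from
        funext (hrepr m)]
      exact integral_finset_sum _ fun u _ =>
        (integrable_const _).indicator (measurableSet_CylS m u)
    have step3 : ∀ u : Fin (m + 1) → Fin k,
        ∫ ξ, (CylS A m u).indicator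
          (fun _ => mratio ν (Ew A m u c n) (Fw A m u)) ξ ∂μ
          = (ν (Ew A m u c n)).toReal := by
      intro u
      rw [integral_indicator_const _ (measurableSet_CylS m u), measureReal_def, hμdef,
          Measure.map_apply measurable_projS (measurableSet_CylS m u),
          projS_preimage_CylS]
      by_cases h0 : ν (Fw A m u) = 0
      · have hE0 : ν (Ew A m u c n) = 0 :=
          measure_mono_null (Ew_subset_Fw m u c n) h0
        simp [mratio, h0, hE0]
      · have hne : (ν (Fw A m u)).toReal ≠ 0 :=
          ENNReal.toReal_ne_zero.mpr ⟨h0, measure_ne_top ν _⟩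
        rw [smul_eq_mul, mratio, mul_comm, div_mul_cancel₀ _ hne]
    rw [step1, step2]
    simp only [step3]
    rw [← ENNReal.toReal_sum (fun u _ => measure_ne_top ν _)]
    congr 1
    rw [show (∑ u : Fin (m + 1) → Fin k, ν (Ew A m u c n))
        = ∑' u : Fin (m + 1) → Fin k, ν (Ew A m u c n) from (tsum_fintype _).symm,
      ← measure_iUnion (disjoint_Ew m n c) (fun u => measurableSet_Ew m u c n),
      iUnion_Ew m n c hn]
  have hconv : Tendsto (fun m => ∫ ξ in M, g m ξ ∂μ) atTop
      (𝓝 (∫ ξ in M, ρval ξ ∂μ)) := by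
    refine tendsto_integral_of_dominated_convergence (fun _ => (1 : ℝ))
      (fun m => ((hgmeas m).aestronglyMeasurable).restrict) (integrable_const 1) ?_ ?_
    · intro m
      apply ae_of_all
      intro ξ
      rw [Real.norm_eq_abs, abs_of_nonneg (hg0 m ξ)]
      exact hg1 m ξ
    · rw [ae_restrict_iff' hMmeas]
      apply ae_of_all
      intro ξ hξ
      exact hρ ξ hξ
  have hconst : Tendsto (fun m => ∫ ξ in M, g m ξ ∂μ) atTop
      (𝓝 ((ν (cylP A c 0 (n - 1))).toReal)) := by
    simp only [key]
    exact tendsto_const_nhds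
  exact tendsto_nhds_unique hconst hconv


end PaperSFT
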